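/- If X ⊆ [ω]^ω is a base for the full semifilter [ω]^ω and A ⊆ X has cardinality strictly less than the continuum 𝔠, then X ∖ A is also a base for [ω]^ω. -/

import Mathlib

open Set Cardinal

/-- Branch sets: for `r : ℕ → Bool`, the set of codes of finite prefixes of `r`. -/
private def branchSet (r : ℕ → Bool) : Set ℕ :=
  Set.range (fun k => Encodable.encode (List.ofFn fun i : Fin k => r i))

private lemma branchSet_infinite (r : ℕ → Bool) : (branchSet r).Infinite := by
  apply Set.infinite_range_of_injective
  intro a b hab
  have := Encodable.encode_injective hab
  have hlen := congrArg List.length this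
  simpa using hlen

private lemma branchSet_ad {r s : ℕ → Bool} (hrs : r ≠ s) :
    (branchSet r ∩ branchSet s).Finite := by
  obtain ⟨k₀, hk₀⟩ : ∃ k, r k ≠ s k := by
    by_contra h; push_neg at h; exact hrs (funext h)
  apply Set.Finite.subset
    ((Set.finite_Iic k₀).image (fun k => Encodable.encode (List.ofFn fun i : Fin k => r i)))
  rintro n ⟨⟨a, ha⟩, ⟨b, hb⟩⟩
  have hab : (List.ofFn fun i : Fin a => r i) = (List.ofFn fun i : Fin b => s i) :=
    Encodable.encode_injective (ha.trans hb.symm)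
  have hlen : a = b := by have := congrArg List.length hab; simpa using this
  subst hlen
  refine ⟨a, ?_, ha⟩
  by_contra hle
  simp only [Set.mem_Iic] at hle
  have : r k₀ = s k₀ := by
    have h1 := congrArg (fun L => L[k₀]?) hab
    have hlt : k₀ < a := lt_of_not_ge (by simpa using hle)
    simpa [List.getElem?_ofFn, hlt] using h1
  exact hk₀ this

theorem stmt3 (X : Set (Set ℕ)) (hX : ∀ x ∈ X, x.Infinite)
    (hbase : ∀ u : Set ℕ, u.Infinite → ∃ x ∈ X, (x \ u).Finite)
    (A : Set (Set ℕ)) (hA : A ⊆ X) (hcard : Cardinal.mk A < Cardinal.continuum) :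
    ∀ u : Set ℕ, u.Infinite → ∃ x ∈ X \ A, (x \ u).Finite := by
  intro u hu
  -- embed ℕ into u
  haveI : Infinite u := hu.to_subtype
  let e : ℕ ↪ u := Infinite.natEmbedding u
  let f : ℕ → ℕ := fun n => (e n : ℕ)
  have hf : Function.Injective f := fun a b h => e.injective (Subtype.ext h)
  have hfu : ∀ n, f n ∈ u := fun n => (e n).2
  -- almost disjoint family in u
  let v : (ℕ → Bool) → Set ℕ := fun r => f '' branchSet r
  have hvu : ∀ r, v r ⊆ u := by rintro r n ⟨m, _, rfl⟩; exact hfu m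
  have hvinf : ∀ r, (v r).Infinite := fun r => (branchSet_infinite r).image (hf.injOn)
  have hvad : ∀ r s, r ≠ s → (v r ∩ v s).Finite := by
    intro r s hrs
    have : v r ∩ v s = f '' (branchSet r ∩ branchSet s) :=
      (Set.image_inter hf).symm
    rw [this]
    exact (branchSet_ad hrs).image f
  -- choose witnesses
  have hchoice : ∀ r : ℕ → Bool, ∃ x ∈ X, (x \ v r).Finite := fun r =>
    hbase (v r) (hvinf r)
  choose g hgX hgfin using hchoice
  -- some g r is outside A
  by_cases hall : ∀ r, g r ∈ A
  · exfalso
    let G : (ℕ → Bool) → A := fun r => ⟨g r, hall r⟩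
    have hGnotinj : ¬ Function.Injective G := by
      intro hinj
      have : Cardinal.continuum ≤ Cardinal.mk A := by
        have h1 := Cardinal.mk_le_of_injective hinj
        have h2 : Cardinal.mk (ℕ → Bool) = Cardinal.continuum := by
          rw [Cardinal.mk_arrow]
          simp [Cardinal.two_power_aleph0]
        rwa [h2] at h1
      exact absurd hcard (not_lt.mpr this)
    rw [Function.not_injective_iff] at hGnotinj
    obtain ⟨r, s, hGeq, hrs⟩ := hGnotinj
    have hgeq : g r = g s := congrArg Subtype.val hGeq
    have hxinf : (g r).Infinite := hX _ (hgX r)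
    have : (g r).Finite := by
      have hsub : g r ⊆ (g r \ v r) ∪ (g r \ v s) ∪ (v r ∩ v s) := by
        intro n hn
        by_cases h1 : n ∈ v r
        · by_cases h2 : n ∈ v s
          · exact Or.inr ⟨h1, h2⟩
          · exact Or.inl (Or.inr ⟨hn, h2⟩)
        · exact Or.inl (Or.inl ⟨hn, h1⟩)
      exact Set.Finite.subset (((hgfin r).union (hgeq ▸ hgfin s)).union (hvad r s hrs)) hsub
    exact hxinf this
  · push_neg at hall
    obtain ⟨r, hr⟩ := hall
    refine ⟨g r, ⟨hgX r, hr⟩, ?_⟩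
    exact (hgfin r).subset (fun n hn => ⟨hn.1, fun h => hn.2 (hvu r h)⟩)
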